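/- For every n ≥ 3 there exists a 3-uniform hypergraph H on n vertices with no linear cycle, not containing K_5^3 as a subhypergraph, such that α(H) = ⌈n/2⌉. (Construction: start from a single hyperedge on 3 vertices if n is odd, or K_4^3 if n is even, and repeatedly add two new vertices v, w together with all hyperedges vwx over all old vertices x.) -/
import Mathlib


/-- A linear cycle of length `k ≥ 3` in a 3-uniform hypergraph with edge set `E`:
an alternating cyclic sequence of distinct vertices `v i` and distinct hyperedges `h i`
with `h i ∩ h (i+1) = {v (i+1)}` and non-consecutive hyperedges disjoint. -/
def IsLinearCycle {V : Type*} [DecidableEq V] (E : Finset (Finset V)) (k : ℕ)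
    (v : ZMod k → V) (h : ZMod k → Finset V) : Prop :=
  3 ≤ k ∧ Function.Injective v ∧ Function.Injective h ∧
    (∀ i, h i ∈ E) ∧ (∀ i, h i ∩ h (i + 1) = {v (i + 1)}) ∧
    (∀ i j, i ≠ j → i + 1 ≠ j → j + 1 ≠ i → h i ∩ h j = ∅)

/-- `E` contains a linear cycle. -/
def HasLinearCycle {V : Type*} [DecidableEq V] (E : Finset (Finset V)) : Prop :=
  ∃ (k : ℕ) (v : ZMod k → V) (h : ZMod k → Finset V), IsLinearCycle E k v h

/-- The degree of a vertex: the number of hyperedges containing it. -/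
def hDegree {V : Type*} [DecidableEq V] (E : Finset (Finset V)) (v : V) : ℕ :=
  (E.filter (fun e => v ∈ e)).card

/-- The support of a vertex `v` in a hyperedge `h`: the pairs of `h` that form a
hyperedge together with `v`. -/
def hSupport {V : Type*} [DecidableEq V] (E : Finset (Finset V)) (h : Finset V) (v : V) :
    Finset (Finset V) :=
  (h.powersetCard 2).filter (fun p => insert v p ∈ E)

/-- A pair of vertices is thick if at least two hyperedges contain it. -/
def ThickPair {V : Type*} [DecidableEq V] (E : Finset (Finset V)) (a b : V) : Prop :=
  2 ≤ (E.filter (fun e => a ∈ e ∧ b ∈ e)).card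

/-- A hyperedge is thick if each of its pairs is contained in at least two hyperedges. -/
def ThickEdge {V : Type*} [DecidableEq V] (E : Finset (Finset V)) (h : Finset V) : Prop :=
  ∀ p ∈ h.powersetCard 2, 2 ≤ (E.filter (fun e => p ⊆ e)).card

/-- `v ∉ h` is strongly associated to the hyperedge `h` if at least two of the 3-sets
formed by `v` and a pair of `h` are hyperedges. -/
def StronglyAssoc {V : Type*} [DecidableEq V] (E : Finset (Finset V)) (h : Finset V) (v : V) :
    Prop :=
  v ∉ h ∧ 2 ≤ (hSupport E h v).card

/-- A linear path of length `k` (given by its sequence of hyperedges): consecutive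
hyperedges meet in exactly one vertex, non-consecutive ones are disjoint. -/
def IsLinearPath {V : Type*} [DecidableEq V] (E : Finset (Finset V)) (k : ℕ)
    (h : Fin k → Finset V) : Prop :=
  Function.Injective h ∧ (∀ i, h i ∈ E) ∧
    (∀ i j : Fin k, (i : ℕ) + 1 = (j : ℕ) → (h i ∩ h j).card = 1) ∧
    (∀ i j : Fin k, (i : ℕ) + 2 ≤ (j : ℕ) → h i ∩ h j = ∅)

/-- A linear tree with vertex set `S` and edge set `T`: built from a single vertex by
repeatedly adding hyperedges meeting the current vertex set in exactly one vertex. -/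
inductive IsLinearTree {V : Type*} [DecidableEq V] : Finset V → Finset (Finset V) → Prop
  | single (v : V) : IsLinearTree {v} ∅
  | extend {S : Finset V} {T : Finset (Finset V)} (e : Finset V) :
      IsLinearTree S T → e.card = 3 → (e ∩ S).card = 1 → IsLinearTree (S ∪ e) (insert e T)

def bb (n : ℕ) : ℕ := 3 + (n + 1) % 2

def myE (n : ℕ) : Finset (Finset (Fin n)) :=
  (Finset.univ.powersetCard 3).filter (fun e =>
    (∀ x ∈ e, (x : ℕ) < bb n) ∨
    ∃ v ∈ e, ∃ w ∈ e, (bb n ≤ (v:ℕ) ∧ ((v:ℕ) - bb n) % 2 = 0) ∧ (w:ℕ) = (v:ℕ) + 1 ∧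
      ∀ x ∈ e, (x:ℕ) ≤ (w:ℕ))

lemma mem_myE {n : ℕ} {e : Finset (Fin n)} : e ∈ myE n ↔ e.card = 3 ∧
    ((∀ x ∈ e, (x : ℕ) < bb n) ∨
    ∃ v ∈ e, ∃ w ∈ e, (bb n ≤ (v:ℕ) ∧ ((v:ℕ) - bb n) % 2 = 0) ∧ (w:ℕ) = (v:ℕ) + 1 ∧
      ∀ x ∈ e, (x:ℕ) ≤ (w:ℕ)) := by
  simp [myE, Finset.mem_filter, Finset.mem_powersetCard]

lemma card_le_of_val_lt {n c : ℕ} (S : Finset (Fin n)) (h : ∀ x ∈ S, (x:ℕ) < c) :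
    S.card ≤ c := by
  have := Finset.card_le_card_of_injOn (fun x : Fin n => (x:ℕ))
    (fun a ha => Finset.mem_range.2 (h a ha)) (fun a _ b _ hab => Fin.ext hab)
  simpa using this

lemma triple_card {n : ℕ} {x y z : Fin n} (h1 : (x:ℕ) ≠ y) (h2 : (x:ℕ) ≠ z)
    (h3 : (y:ℕ) ≠ z) : ({x, y, z} : Finset (Fin n)).card = 3 :=
  Finset.card_eq_three.mpr ⟨x, y, z, fun h => h1 (by rw [h]), fun h => h2 (by rw [h]),
    fun h => h3 (by rw [h]), rfl⟩

lemma no_K5 {n : ℕ} (hn : 3 ≤ n) :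
    ¬ ∃ S : Finset (Fin n), S.card = 5 ∧ ∀ e ⊆ S, e.card = 3 → e ∈ myE n := by
  rintro ⟨S, hS5, hall⟩
  have hSne : S.Nonempty := Finset.card_pos.1 (by omega)
  set m := S.max' hSne with hm
  have hmax : ∀ x ∈ S, (x:ℕ) ≤ (m:ℕ) := fun x hx => S.le_max' x hx
  have hmS : m ∈ S := S.max'_mem hSne
  by_cases hb : (m:ℕ) < bb n
  · have : S.card ≤ bb n := card_le_of_val_lt S (fun x hx => lt_of_le_of_lt (hmax x hx) hb)
    have : bb n ≤ 4 := by unfold bb; omega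
    omega
  push_neg at hb
  -- pick T ⊆ S with m ∈ T, card 3, avoiding val = m-1
  have hS' : 3 ≤ (S.filter (fun x : Fin n => (x:ℕ) ≠ (m:ℕ) - 1 ∧ x ≠ m)).card := by
    set A := S.filter (fun x : Fin n => (x:ℕ) ≠ (m:ℕ) - 1 ∧ x ≠ m) with hA
    set B := S.filter (fun x : Fin n => (x:ℕ) = (m:ℕ) - 1) with hB
    have hsub : S ⊆ insert m (A ∪ B) := by
      intro x hx
      simp only [Finset.mem_insert, Finset.mem_union, hA, hB, Finset.mem_filter]
      by_cases h1 : x = m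
      · exact Or.inl h1
      by_cases h2 : (x:ℕ) = (m:ℕ) - 1
      · exact Or.inr (Or.inr ⟨hx, h2⟩)
      · exact Or.inr (Or.inl ⟨hx, h2, h1⟩)
    have hone : B.card ≤ 1 := by
      apply Finset.card_le_one.2
      intro a ha b hb
      simp only [hB, Finset.mem_filter] at ha hb
      exact Fin.ext (ha.2.trans hb.2.symm)
    have k1 : S.card ≤ (insert m (A ∪ B)).card := Finset.card_le_card hsub
    have k2 : (insert m (A ∪ B)).card ≤ (A ∪ B).card + 1 := Finset.card_insert_le _ _
    have k3 : (A ∪ B).card ≤ A.card + B.card := Finset.card_union_le _ _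
    omega
  have hS'' : 2 ≤ (S.filter (fun x : Fin n => (x:ℕ) ≠ (m:ℕ) - 1 ∧ x ≠ m)).card := by omega
  obtain ⟨T', hT'sub, hT'2⟩ := Finset.exists_subset_card_eq hS''
  have hmT' : m ∉ T' := by
    intro hc
    have := hT'sub hc
    simp only [Finset.mem_filter] at this
    exact this.2.2 rfl
  set T : Finset (Fin n) := insert m T' with hT
  have hTS : T ⊆ S := by
    intro x hx
    rcases Finset.mem_insert.1 hx with h | h
    · exact h ▸ hmS
    · exact (Finset.mem_filter.1 (hT'sub h)).1
  have hTcard : T.card = 3 := by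
    rw [hT, Finset.card_insert_of_notMem hmT', hT'2]
  have hTE := hall T hTS hTcard
  rw [mem_myE] at hTE
  rcases hTE.2 with hbase | ⟨v, hv, w, hw, ⟨hvb, hvpar⟩, hwv, hle⟩
  · exact absurd (hbase m (Finset.mem_insert_self m T')) (by omega)
  · -- w has max val in T, and m ∈ T so val w = m
    have hwm : (w:ℕ) = (m:ℕ) := by
      have h1 := hle m (Finset.mem_insert_self m T')
      have h2 := hmax w (hTS hw)
      omega
    have hvm : (v:ℕ) = (m:ℕ) - 1 := by omega
    have hvT : v ∈ T := hv
    rcases Finset.mem_insert.1 hvT with h | h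
    · omega
    · exact (Finset.mem_filter.1 (hT'sub h)).2.1 hvm

def evens (n : ℕ) : Finset (Fin n) := Finset.univ.filter (fun x => (x:ℕ) % 2 = 0)

lemma card_evens_range (n : ℕ) :
    ((Finset.range n).filter (fun x => x % 2 = 0)).card = (n+1)/2 := by
  induction n with
  | zero => simp
  | succ k ih =>
    rw [Finset.range_add_one, Finset.filter_insert]
    by_cases h : k % 2 = 0
    · rw [if_pos h, Finset.card_insert_of_notMem (by simp)]
      omega
    · rw [if_neg h]
      omega

lemma card_evens (n : ℕ) : (evens n).card = (n+1)/2 := by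
  have himg : (evens n).image (fun x : Fin n => (x:ℕ)) =
      (Finset.range n).filter (fun x => x % 2 = 0) := by
    ext y
    simp only [Finset.mem_image, evens, Finset.mem_filter, Finset.mem_univ, true_and,
      Finset.mem_range]
    constructor
    · rintro ⟨x, hx, rfl⟩; exact ⟨x.isLt, hx⟩
    · rintro ⟨hy, he⟩; exact ⟨⟨y, hy⟩, he, rfl⟩
  have hinj : Set.InjOn (fun x : Fin n => (x:ℕ)) (evens n) := fun a _ b _ hab => Fin.ext hab
  rw [← card_evens_range n, ← himg, Finset.card_image_of_injOn hinj]

lemma evens_indep {n : ℕ} (hn : 3 ≤ n) : ∀ e ∈ myE n, ¬ e ⊆ evens n := by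
  intro e he hsub
  rw [mem_myE] at he
  have heven : ∀ x ∈ e, (x:ℕ) % 2 = 0 := by
    intro x hx
    have := hsub hx
    simpa [evens] using this
  rcases he.2 with hbase | ⟨v, hv, w, hw, _, hwv, _⟩
  · have hb4 : bb n ≤ 4 := by unfold bb; omega
    have hsub2 : e ⊆ ({⟨0, by omega⟩, ⟨2, by omega⟩} : Finset (Fin n)) := by
      intro x hx
      have h1 := hbase x hx
      have h2 := heven x hx
      simp only [Finset.mem_insert, Finset.mem_singleton]
      rcases Nat.lt_or_ge (x:ℕ) 2 with h | h
      · exact Or.inl (Fin.ext (by simp only [Fin.val_mk]; omega))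
      · exact Or.inr (Fin.ext (by simp only [Fin.val_mk]; omega))
    have := Finset.card_le_card hsub2
    have h2 : ({⟨0, by omega⟩, ⟨2, by omega⟩} : Finset (Fin n)).card ≤ 2 :=
      Finset.card_insert_le _ _ |>.trans (by simp)
    omega
  · have h1 := heven v hv
    have h2 := heven w hw
    omega

lemma card_le_two_of_val {n a : ℕ} (S : Finset (Fin n))
    (h : ∀ x ∈ S, (x:ℕ) = a ∨ (x:ℕ) = a + 1) : S.card ≤ 2 := by
  have h2 : ∀ x ∈ S, (x:ℕ) ∈ ({a, a+1} : Finset ℕ) := by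
    intro x hx; simpa using h x hx
  have := Finset.card_le_card_of_injOn (fun x : Fin n => (x:ℕ)) h2
    (fun p _ q _ hpq => Fin.ext hpq)
  have hc : ({a, a+1} : Finset ℕ).card ≤ 2 := Finset.card_insert_le _ _ |>.trans (by simp)
  omega

lemma indep_le {n : ℕ} (hn : 3 ≤ n) (I : Finset (Fin n))
    (hI : ∀ e ∈ myE n, ¬ e ⊆ I) : I.card ≤ (n + 1) / 2 := by
  set b := bb n with hbdef
  have hbfacts : (3 ≤ b ∧ b ≤ 4 ∧ b ≤ n ∧ (n - b) % 2 = 0) := by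
    rw [hbdef]; unfold bb; omega
  set t := (n - b) / 2 with htdef
  have hnt : n = b + 2 * t := by omega
  set g : Fin n → ℕ := fun x => if (x:ℕ) < b then 0 else ((x:ℕ) - b) / 2 + 1 with hg
  have hgmem : ∀ x ∈ I, g x ∈ Finset.range (t + 1) := by
    intro x _
    simp only [hg, Finset.mem_range]
    split
    · omega
    · have := x.isLt; omega
  have hcard := Finset.card_eq_sum_card_fiberwise hgmem
  -- g x = 0 ↔ val < b ; g x = u ≥ 1 → val ∈ {b+2(u-1), b+2(u-1)+1}
  have hg0 : ∀ x : Fin n, g x = 0 → (x:ℕ) < b := by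
    intro x hx; simp only [hg] at hx; by_contra h; rw [if_neg h] at hx; omega
  have hgu : ∀ (u : ℕ) (x : Fin n), 1 ≤ u → g x = u →
      (x:ℕ) = b + 2*(u-1) ∨ (x:ℕ) = b + 2*(u-1) + 1 := by
    intro u x hu hx
    simp only [hg] at hx
    by_cases h : (x:ℕ) < b
    · rw [if_pos h] at hx; omega
    · rw [if_neg h] at hx; omega
  -- fiber 0 bound
  have hfib0 : (I.filter (fun x => g x = 0)).card ≤ 2 := by
    by_contra hcon
    push_neg at hcon
    obtain ⟨T, hTsub, hTcard⟩ := Finset.exists_subset_card_eq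
      (show 3 ≤ (I.filter (fun x => g x = 0)).card by omega)
    refine hI T ?_ (hTsub.trans (Finset.filter_subset _ _))
    rw [mem_myE]
    refine ⟨hTcard, Or.inl ?_⟩
    intro x hx
    exact hg0 x (Finset.mem_filter.1 (hTsub hx)).2
  -- the set of "full pairs"
  set J := (Finset.range t).filter (fun j =>
      (∃ x ∈ I, (x:ℕ) = b + 2*j) ∧ (∃ x ∈ I, (x:ℕ) = b + 2*j + 1)) with hJdef
  -- exclusion: below a full pair nothing is in I
  have hexcl : ∀ j ∈ J, ∀ x ∈ I, b + 2*j ≤ (x:ℕ) := by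
    intro j hj x hx
    by_contra hcon
    push_neg at hcon
    rw [hJdef, Finset.mem_filter] at hj
    obtain ⟨_, ⟨xv, hxvI, hxv⟩, ⟨xw, hxwI, hxw⟩⟩ := hj
    refine hI {x, xv, xw} ?_ ?_
    · rw [mem_myE]
      constructor
      · exact triple_card (by omega) (by omega) (by omega)
      · refine Or.inr ⟨xv, by simp, xw, by simp, ⟨by omega, by omega⟩, by omega, ?_⟩
        intro z hz
        simp only [Finset.mem_insert, Finset.mem_singleton] at hz
        rcases hz with rfl | rfl | rfl <;> omega
    · intro z hz
      simp only [Finset.mem_insert, Finset.mem_singleton] at hz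
      rcases hz with rfl | rfl | rfl <;> assumption
  -- pair fibers have card ≤ 2
  have hfib2 : ∀ u : ℕ, 1 ≤ u → (I.filter (fun x => g x = u)).card ≤ 2 := by
    intro u hu
    exact card_le_two_of_val _ (fun x hx => hgu u x hu (Finset.mem_filter.1 hx).2)
  -- pair fibers with ≥ 2 elements give full pairs
  have hfibJ : ∀ u : ℕ, 1 ≤ u → u ≤ t → 2 ≤ (I.filter (fun x => g x = u)).card →
      u - 1 ∈ J := by
    intro u hu hut hcard2
    obtain ⟨p, hp, q, hq, hpq⟩ := Finset.one_lt_card.1 (lt_of_lt_of_le one_lt_two hcard2)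
    rw [Finset.mem_filter] at hp hq
    have hpv := hgu u p hu hp.2
    have hqv := hgu u q hu hq.2
    have hne : (p:ℕ) ≠ (q:ℕ) := fun h => hpq (Fin.ext h)
    rw [hJdef, Finset.mem_filter]
    refine ⟨Finset.mem_range.2 (by omega), ?_, ?_⟩
    · rcases hpv with h | h
      · exact ⟨p, hp.1, by omega⟩
      · exact ⟨q, hq.1, by omega⟩
    · rcases hpv with h | h
      · exact ⟨q, hq.1, by omega⟩
      · exact ⟨p, hp.1, by omega⟩
  -- choose u0
  have hmain : ∃ u0 ∈ Finset.range (t + 1), ∀ u ∈ Finset.range (t + 1),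
      (I.filter (fun x => g x = u)).card ≤ if u = u0 then 2 else 1 := by
    rcases Finset.eq_empty_or_nonempty J with hJe | hJne
    · refine ⟨0, by simp, ?_⟩
      intro u hu
      rcases Nat.eq_zero_or_pos u with rfl | hupos
      · simpa using hfib0
      · rw [if_neg (by omega)]
        by_contra hcon
        push_neg at hcon
        have := hfibJ u hupos (by simpa using Nat.lt_succ_iff.1 (Finset.mem_range.1 hu))
          (by omega)
        rw [hJe] at this
        simp at this
    · set j := J.max' hJne with hj
      have hjJ : j ∈ J := J.max'_mem hJne
      have hjt : j < t := by
        have := (Finset.mem_filter.1 hjJ).1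
        simpa using this
      refine ⟨j + 1, Finset.mem_range.2 (by omega), ?_⟩
      intro u hu
      by_cases hueq : u = j + 1
      · rw [if_pos hueq, hueq]
        exact hfib2 (j+1) (by omega)
      rw [if_neg hueq]
      by_contra hcon
      push_neg at hcon
      have hcard2 : 2 ≤ (I.filter (fun x => g x = u)).card := by omega
      rcases Nat.lt_or_ge u (j + 1) with hlt | hge
      · -- u ≤ j : fiber is empty by exclusion
        obtain ⟨p, hp, q, hq, hpq⟩ := Finset.one_lt_card.1 (lt_of_lt_of_le one_lt_two hcard2)
        rw [Finset.mem_filter] at hp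
        have hple : (p:ℕ) < b + 2*j := by
          rcases Nat.eq_zero_or_pos u with rfl | hupos
          · have := hg0 p hp.2; omega
          · have := hgu u p hupos hp.2; omega
        have := hexcl j hjJ p hp.1
        omega
      · -- u ≥ j + 2
        have hut : u ≤ t := Nat.lt_succ_iff.1 (Finset.mem_range.1 hu)
        have hin := hfibJ u (by omega) hut hcard2
        have := J.le_max' _ hin
        omega
  obtain ⟨u0, hu0, hbound⟩ := hmain
  have hsum : ∑ u ∈ Finset.range (t+1), (I.filter (fun x => g x = u)).card ≤
      ∑ u ∈ Finset.range (t+1), (if u = u0 then 2 else 1) :=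
    Finset.sum_le_sum hbound
  have hsum2 : ∑ u ∈ Finset.range (t+1), (if u = u0 then 2 else 1) = t + 2 := by
    have : ∀ u : ℕ, (if u = u0 then 2 else 1) = 1 + (if u = u0 then 1 else 0) := by
      intro u; split <;> rfl
    simp_rw [this]
    rw [Finset.sum_add_distrib, Finset.sum_const, Finset.sum_ite_eq' (Finset.range (t+1)) u0
      (fun _ => 1), if_pos hu0]
    simp
  have : (n + 1) / 2 = t + 2 := by omega
  omega

lemma no_cycle {n : ℕ} (hn : 3 ≤ n) : ¬ HasLinearCycle (myE n) := by
  rintro ⟨k, v, h, hk3, hvinj, _hhinj, hmem, hcons, _⟩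
  haveI : NeZero k := ⟨by omega⟩
  haveI : Fact (1 < k) := ⟨by omega⟩
  have hbfacts : (3 ≤ bb n ∧ bb n ≤ 4 ∧ bb n ≤ n) := by unfold bb; omega
  set W : Finset (Fin n) := Finset.univ.biUnion h with hW
  have hWne : W.Nonempty := by
    have h0 : (h 0).card = 3 := (mem_myE.1 (hmem 0)).1
    obtain ⟨x, hx⟩ := Finset.card_pos.1 (by rw [h0]; norm_num)
    exact ⟨x, Finset.mem_biUnion.2 ⟨0, Finset.mem_univ _, hx⟩⟩
  obtain ⟨x0, hx0W, hx0⟩ := Finset.exists_mem_eq_sup W hWne (fun x : Fin n => (x:ℕ))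
  set M := W.sup (fun x : Fin n => (x:ℕ)) with hM
  have hle : ∀ i : ZMod k, ∀ x ∈ h i, (x:ℕ) ≤ M :=
    fun i x hx => Finset.le_sup (Finset.mem_biUnion.2 ⟨i, Finset.mem_univ _, hx⟩)
  obtain ⟨i0, _, hx0i0⟩ := Finset.mem_biUnion.1 hx0W
  have hi0card : (h i0).card = 3 := (mem_myE.1 (hmem i0)).1
  have hconscard : ∀ i : ZMod k, (h i ∩ h (i+1)).card = 1 := by
    intro i; rw [hcons i, Finset.card_singleton]
  rcases (mem_myE.1 (hmem i0)).2 with hbase | ⟨vv, hvv, ww, hww, ⟨hvb, hvpar⟩, hwv, hle0⟩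
  · -- all vertices of the cycle are in the base: impossible
    have hMb : M < bb n := hx0 ▸ hbase x0 hx0i0
    have hall : ∀ x ∈ h i0 ∪ h (i0 + 1), (x:ℕ) < bb n := by
      intro x hx
      rcases Finset.mem_union.1 hx with hx | hx
      · exact lt_of_le_of_lt (hle i0 x hx) hMb
      · exact lt_of_le_of_lt (hle (i0+1) x hx) hMb
    have hcard4 := card_le_of_val_lt _ hall
    have hcu := Finset.card_union_add_card_inter (h i0) (h (i0 + 1))
    have h1card : (h (i0+1)).card = 3 := (mem_myE.1 (hmem (i0+1))).1
    have := hconscard i0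
    omega
  · -- pair case
    have hMww : M = (ww:ℕ) := le_antisymm (hx0 ▸ hle0 x0 hx0i0) (hle i0 ww hww)
    have key : ∀ e ∈ myE n, (∀ x ∈ e, (x:ℕ) ≤ (ww:ℕ)) → (h i0 ∩ e).card = 1 →
        vv ∉ e ∧ ww ∉ e := by
      intro e he hlee hcard1
      have hboth : ¬ (vv ∈ e ∧ ww ∈ e) := by
        rintro ⟨h1, h2⟩
        have : 1 < (h i0 ∩ e).card := Finset.one_lt_card.2
          ⟨vv, Finset.mem_inter.2 ⟨hvv, h1⟩, ww, Finset.mem_inter.2 ⟨hww, h2⟩,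
            fun hc => by rw [hc] at hwv; omega⟩
        omega
      rcases (mem_myE.1 he).2 with hbase' | ⟨v', hv', w', hw', ⟨hv'b, hv'par⟩, hw'v', hle'⟩
      · constructor
        · intro hc; have := hbase' vv hc; omega
        · intro hc; have := hbase' ww hc; omega
      · have hw'le : (w':ℕ) ≤ (ww:ℕ) := hlee w' hw'
        constructor
        · intro hc
          have hvle : (vv:ℕ) ≤ (w':ℕ) := hle' vv hc
          rcases (by omega : (w':ℕ) = (vv:ℕ) ∨ (w':ℕ) = (vv:ℕ) + 1) with heq | heq
          · -- v' = vv - 1 : parity contradiction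
            omega
          · -- v' = vv, so vv,ww ∈ e
            have hv'vv : v' = vv := Fin.ext (by omega)
            have hw'ww : w' = ww := Fin.ext (by omega)
            exact hboth ⟨hv'vv ▸ hv', hw'ww ▸ hw'⟩
        · intro hc
          have hvle : (ww:ℕ) ≤ (w':ℕ) := hle' ww hc
          have hw'ww : w' = ww := Fin.ext (by omega)
          have hv'vv : v' = vv := Fin.ext (by omega)
          exact hboth ⟨hv'vv ▸ hv', hc⟩
    have hnext := key (h (i0+1)) (hmem _) (fun x hx => hMww ▸ hle (i0+1) x hx) (hconscard i0)
    have hprevcard : (h i0 ∩ h (i0-1)).card = 1 := by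
      rw [Finset.inter_comm]
      have := hconscard (i0-1)
      rwa [sub_add_cancel] at this
    have hprev := key (h (i0-1)) (hmem _) (fun x hx => hMww ▸ hle (i0-1) x hx) hprevcard
    -- z1 = v (i0+1), z2 = v i0 are both the third vertex of h i0
    have hz1 : v (i0+1) ∈ h i0 ∧ v (i0+1) ∈ h (i0+1) := by
      have : v (i0+1) ∈ h i0 ∩ h (i0+1) := by rw [hcons i0]; exact Finset.mem_singleton_self _
      exact ⟨(Finset.mem_inter.1 this).1, (Finset.mem_inter.1 this).2⟩
    have hz2 : v i0 ∈ h i0 ∧ v i0 ∈ h (i0-1) := by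
      have h' := hcons (i0-1)
      rw [sub_add_cancel] at h'
      have : v i0 ∈ h (i0-1) ∩ h i0 := by rw [h']; exact Finset.mem_singleton_self _
      exact ⟨(Finset.mem_inter.1 this).2, (Finset.mem_inter.1 this).1⟩
    have hsub : ({vv, ww} : Finset (Fin n)) ⊆ h i0 := by
      intro x hx
      rcases Finset.mem_insert.1 hx with rfl | hx
      · exact hvv
      · exact (Finset.mem_singleton.1 hx) ▸ hww
    have hpaircard : ({vv, ww} : Finset (Fin n)).card = 2 := by
      rw [Finset.card_insert_of_notMem (by
        simp only [Finset.mem_singleton]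
        intro hc; rw [hc] at hwv; omega), Finset.card_singleton]
    have hDcard : (h i0 \ {vv, ww}).card = 1 := by
      rw [Finset.card_sdiff_of_subset hsub, hpaircard, hi0card]
    have hz1D : v (i0+1) ∈ h i0 \ {vv, ww} := by
      rw [Finset.mem_sdiff]
      refine ⟨hz1.1, ?_⟩
      simp only [Finset.mem_insert, Finset.mem_singleton]
      rintro (rfl | rfl)
      · exact hnext.1 hz1.2
      · exact hnext.2 hz1.2
    have hz2D : v i0 ∈ h i0 \ {vv, ww} := by
      rw [Finset.mem_sdiff]
      refine ⟨hz2.1, ?_⟩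
      simp only [Finset.mem_insert, Finset.mem_singleton]
      rintro (rfl | rfl)
      · exact hprev.1 hz2.2
      · exact hprev.2 hz2.2
    have heqz : v (i0+1) = v i0 := Finset.card_le_one.1 (le_of_eq hDcard) _ hz1D _ hz2D
    have : i0 + 1 = i0 := hvinj heqz
    have h10 : (1 : ZMod k) = 0 := by
      have := congrArg (fun z => z - i0) this
      simpa [add_comm, add_sub_cancel_right] using this
    exact one_ne_zero h10

/-- For every `n ≥ 3` there is a 3-uniform linear-cycle-free hypergraph on `n` vertices
without `K₅³` whose independence number is exactly `⌈n/2⌉`. -/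
theorem independence_number_sharp (n : ℕ) (hn : 3 ≤ n) :
    ∃ E : Finset (Finset (Fin n)),
      (∀ e ∈ E, e.card = 3) ∧ ¬ HasLinearCycle E ∧
      (¬ ∃ S : Finset (Fin n), S.card = 5 ∧ ∀ e ⊆ S, e.card = 3 → e ∈ E) ∧
      (∃ I : Finset (Fin n), (∀ e ∈ E, ¬ e ⊆ I) ∧ I.card = (n + 1) / 2) ∧
      (∀ I : Finset (Fin n), (∀ e ∈ E, ¬ e ⊆ I) → I.card ≤ (n + 1) / 2) := by
  refine ⟨myE n, fun e he => (mem_myE.1 he).1, no_cycle hn, no_K5 hn,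
    ⟨evens n, evens_indep hn, card_evens n⟩, fun I hI => indep_le hn I hI⟩
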